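/- Let R̄ be a commutative ring of characteristic p. Any relatively perfect commutative R̄-algebra S̄ (i.e. one whose relative Frobenius Frob_{S̄/R̄} : S̄ ⊗_{ψ, Frob_{R̄}} R̄ → S̄ is an isomorphism) is formally étale over R̄. -/

import Mathlib

/-- `R` viewed as an `R`-module through the Frobenius endomorphism `a ↦ aᵖ`. -/
def FrobTwist (p : ℕ) (R : Type*) : Type _ := R

/-- The identity of `R`, viewed as a map `FrobTwist p R → R`. -/
def FrobTwist.val {p : ℕ} {R : Type*} (x : FrobTwist p R) : R := x

instance (p : ℕ) (R : Type*) [CommRing R] : AddCommGroup (FrobTwist p R) :=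
  inferInstanceAs (AddCommGroup R)

noncomputable instance (p : ℕ) [Fact p.Prime] (R : Type*) [CommRing R] [CharP R p] :
    Module R (FrobTwist p R) :=
  Module.compHom (R := R) R (frobenius R p)

/-- The relative Frobenius `S ⊗_{ψ, Frob_R} R → S`, `s ⊗ r ↦ s^p * ψ(r)`, as an additive
map on the tensor product of `S` (with its usual `R`-module structure) and `R` (with the
Frobenius-twisted `R`-module structure). -/
noncomputable def relativeFrobenius (p : ℕ) [Fact p.Prime] (R S : Type*) [CommRing R]
    [CommRing S] [Algebra R S] [CharP R p] [CharP S p] :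
    TensorProduct R S (FrobTwist p R) →+ S :=
  TensorProduct.liftAddHom
    (AddMonoidHom.mk'
      (fun s => AddMonoidHom.mk' (fun r : FrobTwist p R => s ^ p * algebraMap R S r.val)
        (fun r r' => by
          show s ^ p * algebraMap R S (r.val + r'.val) = _
          rw [map_add, mul_add]))
      (fun s t => by
        ext r
        show (s + t) ^ p * algebraMap R S r.val =
          s ^ p * algebraMap R S r.val + t ^ p * algebraMap R S r.val
        haveI : ExpChar S p := ExpChar.prime Fact.out
        rw [add_pow_char, add_mul]))
    (fun a s r => by
      show (a • s) ^ p * algebraMap R S r.val =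
        s ^ p * algebraMap R S (frobenius R p a * r.val)
      rw [Algebra.smul_def, mul_pow, ← map_pow, map_mul, frobenius_def]
      ring)



theorem pow_eq_of_sq_zero' {B : Type*} [CommRing B] {p : ℕ} (hp : p.Prime) (hpB : (p : B) = 0)
    (b i : B) (hi : i * i = 0) : (b + i) ^ p = b ^ p := by
  obtain ⟨q, rfl⟩ : ∃ q, p = q + 2 := ⟨p - 2, by have := hp.two_le; omega⟩
  rw [add_pow, Finset.sum_range_succ, Finset.sum_range_succ,
    Finset.sum_eq_zero (fun k hk => ?_)]
  · have h1 : ((q : B) + 1 + 1) = ((q + 2 : ℕ) : B) := by push_cast; ring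
    simp [Nat.sub_self, h1, hpB]
  · have hk' : k < q + 1 := Finset.mem_range.mp hk
    have h2 : q + 2 - k = (q - k) + 2 := by omega
    rw [h2, pow_add, pow_two, hi, mul_zero, mul_zero, zero_mul]

/-- p-th powers of lifts agree. -/
theorem pow_p_well_defined {B : Type*} [CommRing B] {p : ℕ} (hp : p.Prime) (hpB : (p : B) = 0)
    {I : Ideal B} (hI : I ^ 2 = ⊥) {a b : B}
    (hab : Ideal.Quotient.mk I a = Ideal.Quotient.mk I b) : a ^ p = b ^ p := by
  have h : a - b ∈ I := Ideal.Quotient.eq.mp hab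
  have hi : (a - b) * (a - b) = 0 := by
    have : (a - b) * (a - b) ∈ I ^ 2 := by
      rw [pow_two]; exact Ideal.mul_mem_mul h h
    rwa [hI, Ideal.mem_bot] at this
  calc a ^ p = (b + (a - b)) ^ p := by ring_nf
    _ = b ^ p := pow_eq_of_sq_zero' hp hpB b _ hi

/-- The Frobenius lift `B ⧸ I → B`. -/
noncomputable def frobLift {B : Type*} [CommRing B] (p : ℕ) (I : Ideal B) : B ⧸ I → B :=
  fun x => (Function.surjInv Ideal.Quotient.mk_surjective x) ^ p

theorem frobLift_mk {B : Type*} [CommRing B] {p : ℕ} (hp : p.Prime) (hpB : (p : B) = 0)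
    {I : Ideal B} (hI : I ^ 2 = ⊥) (a : B) :
    frobLift p I (Ideal.Quotient.mk I a) = a ^ p :=
  pow_p_well_defined hp hpB hI (Function.surjInv_eq Ideal.Quotient.mk_surjective _)

section FrobLiftProps

variable {B : Type*} [CommRing B] {p : ℕ} (hp : p.Prime) (hpB : (p : B) = 0)
  {I : Ideal B} (hI : I ^ 2 = ⊥)

include hp hpB hI

theorem frobLift_add (x y : B ⧸ I) :
    frobLift p I (x + y) = frobLift p I x + frobLift p I y := by
  obtain ⟨a, rfl⟩ := Ideal.Quotient.mk_surjective x
  obtain ⟨b, rfl⟩ := Ideal.Quotient.mk_surjective y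
  rw [← map_add, frobLift_mk hp hpB hI, frobLift_mk hp hpB hI, frobLift_mk hp hpB hI]
  obtain ⟨r, hr⟩ := exists_add_pow_prime_eq hp (x := a) (y := b)
  rw [hr, hpB, zero_mul, zero_mul, zero_mul, add_zero]

theorem frobLift_mul (x y : B ⧸ I) :
    frobLift p I (x * y) = frobLift p I x * frobLift p I y := by
  obtain ⟨a, rfl⟩ := Ideal.Quotient.mk_surjective x
  obtain ⟨b, rfl⟩ := Ideal.Quotient.mk_surjective y
  rw [← map_mul, frobLift_mk hp hpB hI, frobLift_mk hp hpB hI, frobLift_mk hp hpB hI, mul_pow]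

theorem frobLift_one : frobLift p I 1 = 1 := by
  have := frobLift_mk hp hpB hI (1 : B)
  rwa [map_one, one_pow] at this

theorem mk_frobLift (x : B ⧸ I) : Ideal.Quotient.mk I (frobLift p I x) = x ^ p := by
  obtain ⟨a, rfl⟩ := Ideal.Quotient.mk_surjective x
  rw [frobLift_mk hp hpB hI, map_pow]

end FrobLiftProps

theorem frobLift_algebraMap {R : Type*} {B : Type*} [CommRing R] [CommRing B] [Algebra R B]
    {p : ℕ} (hp : p.Prime) (hpB : ((p : ℕ) : B) = 0) {I : Ideal B} (hI : I ^ 2 = ⊥) (a : R) :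
    frobLift p I (algebraMap R (B ⧸ I) a) = algebraMap R B (a ^ p) := by
  have h : algebraMap R (B ⧸ I) a = Ideal.Quotient.mk I (algebraMap R B a) :=
    ((Ideal.Quotient.mkₐ R I).commutes a).symm
  rw [h, frobLift_mk hp hpB hI, ← map_pow]


/-- The candidate lift `S ⊗ FrobTwist R →+ B` of `f : S →ₐ[R] B ⧸ I`. -/
noncomputable def liftMap (p : ℕ) [Fact p.Prime] (R S B : Type u) [CommRing R] [CommRing S]
    [Algebra R S] [CharP R p] [CharP S p] [CommRing B] [Algebra R B]
    (hpB : ((p : ℕ) : B) = 0) (I : Ideal B) (hI : I ^ 2 = ⊥) (f : S →ₐ[R] B ⧸ I) :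
    TensorProduct R S (FrobTwist p R) →+ B :=
  TensorProduct.liftAddHom
    (AddMonoidHom.mk'
      (fun s => AddMonoidHom.mk'
        (fun r : FrobTwist p R => frobLift p I (f s) * algebraMap R B r.val)
        (fun r r' => by
          show frobLift p I (f s) * algebraMap R B (r.val + r'.val) = _
          rw [map_add, mul_add]))
      (fun s t => by
        ext r
        show frobLift p I (f (s + t)) * algebraMap R B r.val =
          frobLift p I (f s) * algebraMap R B r.val + frobLift p I (f t) * algebraMap R B r.val
        rw [map_add, frobLift_add Fact.out hpB hI, add_mul]))
    (fun a s r => by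
      show frobLift p I (f (a • s)) * algebraMap R B r.val =
        frobLift p I (f s) * algebraMap R B (frobenius R p a * r.val)
      rw [Algebra.smul_def, map_mul, AlgHom.commutes, frobLift_mul Fact.out hpB hI,
        frobLift_algebraMap Fact.out hpB hI, map_mul, frobenius_def]
      ring)

theorem liftMap_tmul (p : ℕ) [Fact p.Prime] (R S B : Type u) [CommRing R] [CommRing S]
    [Algebra R S] [CharP R p] [CharP S p] [CommRing B] [Algebra R B]
    (hpB : ((p : ℕ) : B) = 0) (I : Ideal B) (hI : I ^ 2 = ⊥) (f : S →ₐ[R] B ⧸ I)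
    (s : S) (r : FrobTwist p R) :
    liftMap p R S B hpB I hI f (s ⊗ₜ r) = frobLift p I (f s) * algebraMap R B r.val :=
  rfl

theorem relativeFrobenius_tmul (p : ℕ) [Fact p.Prime] (R S : Type*) [CommRing R]
    [CommRing S] [Algebra R S] [CharP R p] [CharP S p] (s : S) (r : FrobTwist p R) :
    relativeFrobenius p R S (s ⊗ₜ r) = s ^ p * algebraMap R S r.val :=
  rfl

universe u

/-- a relatively perfect commutative algebra in characteristic `p`
(i.e. one whose relative Frobenius is an isomorphism) is formally étale. -/
theorem relativelyPerfect_formallyEtale (p : ℕ) [Fact p.Prime] (R S : Type u)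
    [CommRing R] [CommRing S] [Algebra R S] [CharP R p] [CharP S p]
    (hRP : Function.Bijective (relativeFrobenius p R S)) :
    Algebra.FormallyEtale R S := by
  rw [Algebra.FormallyEtale.iff_comp_bijective]
  intro B _ _ I hI
  have hpB : ((p : ℕ) : B) = 0 := by
    rw [← map_natCast (algebraMap R B) p, CharP.cast_eq_zero, map_zero]
  constructor
  · -- injectivity: formally unramified
    intro g₁ g₂ hgg
    ext s
    obtain ⟨x, rfl⟩ := hRP.2 s
    induction x using TensorProduct.induction_on with
    | zero => rw [map_zero, map_zero, map_zero]
    | tmul s r =>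
      rw [relativeFrobenius_tmul, map_mul, map_mul, map_pow, map_pow,
        AlgHom.commutes, AlgHom.commutes]
      congr 1
      exact pow_p_well_defined Fact.out hpB hI
        (a := g₁ s) (b := g₂ s) (by simpa using AlgHom.congr_fun hgg s)
    | add x y hx hy => rw [map_add, map_add, map_add, hx, hy]
  · -- surjectivity: formally smooth
    intro f
    let e := AddEquiv.ofBijective (relativeFrobenius p R S) hRP
    let L := liftMap p R S B hpB I hI f
    let g : S → B := fun s => L (e.symm s)
    have hg : ∀ x, g (relativeFrobenius p R S x) = L x := fun x => by
      show L (e.symm (e x)) = L x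
      rw [AddEquiv.symm_apply_apply]
    have g0 : g 0 = 0 := by show L (e.symm 0) = 0; rw [map_zero, map_zero]
    have gadd : ∀ a b, g (a + b) = g a + g b := fun a b => by
      show L (e.symm (a + b)) = L (e.symm a) + L (e.symm b)
      rw [map_add, map_add]
    have gmul : ∀ a b, g (a * b) = g a * g b := by
      have main : ∀ x y : TensorProduct R S (FrobTwist p R),
          g (relativeFrobenius p R S x * relativeFrobenius p R S y)
            = g (relativeFrobenius p R S x) * g (relativeFrobenius p R S y) := by
        intro x y
        induction x using TensorProduct.induction_on with
        | zero => rw [map_zero, zero_mul, g0, zero_mul]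
        | add x₁ x₂ h₁ h₂ => rw [map_add, add_mul, gadd, gadd, h₁, h₂, add_mul]
        | tmul s r =>
          induction y using TensorProduct.induction_on with
          | zero => rw [map_zero, mul_zero, g0, mul_zero]
          | add y₁ y₂ h₁ h₂ => rw [map_add, mul_add, gadd, gadd, h₁, h₂, mul_add]
          | tmul t r' =>
            have e1 : relativeFrobenius p R S (s ⊗ₜ r) * relativeFrobenius p R S (t ⊗ₜ r')
                = relativeFrobenius p R S
                    ((s * t) ⊗ₜ (show FrobTwist p R from r.val * r'.val)) := by
              rw [relativeFrobenius_tmul, relativeFrobenius_tmul, relativeFrobenius_tmul]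
              show _ = (s * t) ^ p * algebraMap R S (r.val * r'.val)
              rw [mul_pow, map_mul]; ring
            rw [e1, hg, hg, hg, liftMap_tmul, liftMap_tmul, liftMap_tmul]
            show frobLift p I (f (s * t)) * algebraMap R B (r.val * r'.val)
              = frobLift p I (f s) * algebraMap R B r.val
                * (frobLift p I (f t) * algebraMap R B r'.val)
            rw [map_mul, frobLift_mul Fact.out hpB hI, map_mul]
            ring
      intro a b
      obtain ⟨x, rfl⟩ := hRP.2 a
      obtain ⟨y, rfl⟩ := hRP.2 b
      exact main x y
    have gcomm : ∀ a : R, g (algebraMap R S a) = algebraMap R B a := by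
      intro a
      have e1 : algebraMap R S a
          = relativeFrobenius p R S ((1 : S) ⊗ₜ (show FrobTwist p R from a)) := by
        rw [relativeFrobenius_tmul, one_pow, one_mul]
        rfl
      rw [e1, hg, liftMap_tmul]
      show frobLift p I (f 1) * algebraMap R B a = algebraMap R B a
      rw [map_one, frobLift_one Fact.out hpB hI, one_mul]
    have gone : g 1 = 1 := by
      have := gcomm 1
      rwa [map_one, map_one] at this
    let G : S →ₐ[R] B :=
      { toFun := g
        map_one' := gone
        map_mul' := gmul
        map_zero' := g0
        map_add' := gadd
        commutes' := gcomm }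
    refine ⟨G, ?_⟩
    ext s
    obtain ⟨x, rfl⟩ := hRP.2 s
    show Ideal.Quotient.mk I (g (relativeFrobenius p R S x)) = f (relativeFrobenius p R S x)
    induction x using TensorProduct.induction_on with
    | zero => rw [map_zero, g0, map_zero, map_zero]
    | add x y hx hy => rw [map_add, gadd, map_add, hx, hy, map_add]
    | tmul s r =>
      rw [hg, liftMap_tmul, map_mul, mk_frobLift Fact.out hpB hI, relativeFrobenius_tmul,
        map_mul, map_pow, AlgHom.commutes]
      congr 1
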